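/- Fix η₀ > 0, reals θ and φ, and an admissible quadruple (n,m,ν,μ). Then the function g(η) = √(cosh η − cos θ) · (Q_{n−1/2}^m(cosh η)/q_{n,m}) · Φ_n^ν(θ) Φ_m^μ(φ) is differentiable at η = η₀ and its normal derivative, namely (cosh η₀ − cos θ) · g′(η₀), equals N_{n,m}^{ν,μ}(θ,φ). -/

import Mathlib

open Real MeasureTheory intervalIntegral Filter Topology

/-- Associated Legendre function of the second kind of half-integer degree,
`Q_{n-1/2}^m(t)`, defined via its real integral representation (valid for `t > 1`). -/
noncomputable def Qh (n m : ℕ) (t : ℝ) : ℝ :=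
  ((-1 : ℝ) ^ m / (2 : ℝ) ^ ((n : ℝ) + 1 / 2)) *
    (Real.Gamma ((n : ℝ) + (m : ℝ) + 1 / 2) / Real.Gamma ((n : ℝ) + 1 / 2)) *
    (t ^ 2 - 1) ^ ((m : ℝ) / 2) *
    ∫ s in (-1 : ℝ)..1, (1 - s ^ 2) ^ ((n : ℝ) - 1 / 2) * (t - s) ^ (-((n : ℝ) + (m : ℝ) + 1 / 2))

/-- `q_{n,m} = Q_{n-1/2}^m(cosh η₀)`. -/
noncomputable def qh (η₀ : ℝ) (n m : ℕ) : ℝ := Qh n m (Real.cosh η₀)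

/-- `Φ_n^{+1}(θ) = cos (n θ)`, `Φ_n^{-1}(θ) = sin (n θ)`. -/
noncomputable def Phi (ν : ℤ) (n : ℤ) (θ : ℝ) : ℝ :=
  if ν = 1 then Real.cos ((n : ℝ) * θ) else Real.sin ((n : ℝ) * θ)

/-- A quadruple `(n, m, ν, μ)` is admissible. -/
def Admissible (n m : ℕ) (ν μ : ℤ) : Prop :=
  (ν = 1 ∨ ν = -1) ∧ (μ = 1 ∨ μ = -1) ∧ ¬(n = 0 ∧ ν = -1) ∧ ¬(m = 0 ∧ μ = -1)

/-- Toroidal Neumann constant `ρ_{n,m}(η₀)` (`n ≥ 1`). -/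
noncomputable def rhoT (η₀ : ℝ) (n m : ℕ) : ℝ :=
  if n = 1 then
    (1 / (2 * Real.sinh η₀)) *
      (Real.cosh η₀ + (2 * (m : ℝ) - 1) * qh η₀ 1 m / qh η₀ 0 m)
  else
    (1 / (4 * Real.sinh η₀)) *
      ((2 * (n : ℝ) - 1) * Real.cosh η₀ +
        (2 * ((m : ℝ) - (n : ℝ)) + 1) * qh η₀ n m / qh η₀ (n - 1) m)

/-- Toroidal Neumann constant `σ_{n,m}(η₀)`. -/
noncomputable def sigmaT (η₀ : ℝ) (n m : ℕ) : ℝ :=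
  (-1 / (2 * Real.sinh η₀)) *
    ((2 * (n : ℝ) * Real.cosh η₀ ^ 2 + 1) +
      (2 * ((m : ℝ) - (n : ℝ)) - 1) * Real.cosh η₀ * qh η₀ (n + 1) m / qh η₀ n m)

/-- Toroidal Neumann constant `τ_{n,m}(η₀)`. -/
noncomputable def tauT (η₀ : ℝ) (n m : ℕ) : ℝ :=
  (1 / (4 * Real.sinh η₀)) *
    ((2 * (n : ℝ) + 3) * Real.cosh η₀ +
      (2 * ((m : ℝ) - (n : ℝ)) - 3) * qh η₀ (n + 2) m / qh η₀ (n + 1) m)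

/-- The normal derivative `N_{n,m}^{ν,μ}(θ,φ)` of the interior toroidal harmonic
`I_{n,m}^{ν,μ}` on the torus `η = η₀`. -/
noncomputable def NDer (η₀ : ℝ) (n m : ℕ) (ν μ : ℤ) (θ φ : ℝ) : ℝ :=
  (Real.sqrt (Real.cosh η₀ - Real.cos θ) / (4 * Real.sinh η₀)) * Phi μ (m : ℤ) φ *
    (Phi ν ((n : ℤ) - 1) θ *
        ((1 + 2 * (n : ℝ)) * Real.cosh η₀ -
          (2 * ((n : ℝ) - (m : ℝ)) + 1) * qh η₀ (n + 1) m / qh η₀ n m) -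
      2 * Phi ν (n : ℤ) θ *
        ((2 * (n : ℝ) * Real.cosh η₀ ^ 2 + 1) -
          (2 * ((n : ℝ) - (m : ℝ)) + 1) * Real.cosh η₀ * qh η₀ (n + 1) m / qh η₀ n m) +
      Phi ν ((n : ℤ) + 1) θ *
        ((1 + 2 * (n : ℝ)) * Real.cosh η₀ -
          (2 * ((n : ℝ) - (m : ℝ)) + 1) * qh η₀ (n + 1) m / qh η₀ n m))

/-- Interior toroidal harmonic `I_{n,m}^{ν,μ}[η₀]` in toroidal coordinates. -/
noncomputable def Ih (η₀ : ℝ) (n m : ℕ) (ν μ : ℤ) (η θ φ : ℝ) : ℝ :=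
  Real.sqrt (Real.cosh η - Real.cos θ) *
    (Qh n m (Real.cosh η) / Qh n m (Real.cosh η₀)) * Phi ν (n : ℤ) θ * Phi μ (m : ℤ) φ

noncomputable def Kint (p b t : ℝ) : ℝ :=
  ∫ s in (-1:ℝ)..1, (1 - s^2)^p * (t - s)^(-b)

lemma int_aux (p : ℝ) (hp : -1 < p) {c : ℝ → ℝ}
    (hc : ContinuousOn c (Set.Icc (-1:ℝ) 1)) :
    IntervalIntegrable (fun s => (1 - s^2)^p * c s) volume (-1) 1 := by
  have hsub1 : Set.uIcc (0:ℝ) 1 ⊆ Set.Icc (-1:ℝ) 1 := by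
    rw [Set.uIcc_of_le (by norm_num : (0:ℝ) ≤ 1)]
    intro x hx; exact ⟨by linarith [hx.1], hx.2⟩
  have hsub2 : Set.uIcc (-1:ℝ) 0 ⊆ Set.Icc (-1:ℝ) 1 := by
    rw [Set.uIcc_of_le (by norm_num : (-1:ℝ) ≤ 0)]
    intro x hx; exact ⟨hx.1, by linarith [hx.2]⟩
  have h1 : IntervalIntegrable (fun s => (1 - s^2)^p * c s) volume (-1) 0 := by
    have base : IntervalIntegrable (fun s : ℝ => (1 + s)^p) volume (-1) 0 := by
      have := (intervalIntegrable_rpow' hp (a := (0:ℝ)) (b := 1)).comp_add_left 1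
      simpa using this
    have contg : ContinuousOn (fun s : ℝ => (1 - s)^p * c s) (Set.uIcc (-1:ℝ) 0) := by
      apply ContinuousOn.mul
      · apply ContinuousOn.rpow_const (by fun_prop)
        intro x hx
        have hx' : x ∈ Set.Icc (-1:ℝ) 0 := by rwa [Set.uIcc_of_le (by norm_num : (-1:ℝ) ≤ 0)] at hx
        exact Or.inl (ne_of_gt (by linarith [hx'.2] : (0:ℝ) < 1 - x))
      · exact hc.mono hsub2
    refine (base.mul_continuousOn contg).congr ?_
    intro s hs; beta_reduce
    have hs' : s ∈ Set.Ioc (-1:ℝ) 0 := by rwa [Set.uIoc_of_le (by norm_num : (-1:ℝ) ≤ 0)] at hs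
    have h1s : (0:ℝ) ≤ 1 + s := by linarith [hs'.1]
    have h2s : (0:ℝ) ≤ 1 - s := by linarith [hs'.2]
    have : (1 - s^2 : ℝ) = (1+s) * (1-s) := by ring
    rw [this, Real.mul_rpow h1s h2s]; ring
  have h2 : IntervalIntegrable (fun s => (1 - s^2)^p * c s) volume 0 1 := by
    have base : IntervalIntegrable (fun s : ℝ => (1 - s)^p) volume 0 1 := by
      have := ((intervalIntegrable_rpow' hp (a := (0:ℝ)) (b := 1)).comp_sub_left 1).symm
      simpa using this
    have contg : ContinuousOn (fun s : ℝ => (1 + s)^p * c s) (Set.uIcc (0:ℝ) 1) := by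
      apply ContinuousOn.mul
      · apply ContinuousOn.rpow_const (by fun_prop)
        intro x hx
        have hx' : x ∈ Set.Icc (0:ℝ) 1 := by rwa [Set.uIcc_of_le (by norm_num : (0:ℝ) ≤ 1)] at hx
        exact Or.inl (ne_of_gt (by linarith [hx'.1] : (0:ℝ) < 1 + x))
      · exact hc.mono hsub1
    refine (base.mul_continuousOn contg).congr ?_
    intro s hs; beta_reduce
    have hs' : s ∈ Set.Ioc (0:ℝ) 1 := by rwa [Set.uIoc_of_le (by norm_num : (0:ℝ) ≤ 1)] at hs
    have h1s : (0:ℝ) ≤ 1 - s := by linarith [hs'.2]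
    have h2s : (0:ℝ) ≤ 1 + s := by linarith [hs'.1]
    have : (1 - s^2 : ℝ) = (1-s) * (1+s) := by ring
    rw [this, Real.mul_rpow h1s h2s]; ring
  exact h1.trans h2

lemma cont_tb {t : ℝ} (ht : 1 < t) (b : ℝ) :
    ContinuousOn (fun s : ℝ => (t - s)^(-b)) (Set.Icc (-1:ℝ) 1) := by
  apply ContinuousOn.rpow_const (by fun_prop)
  intro x hx
  exact Or.inl (ne_of_gt (by linarith [hx.2] : (0:ℝ) < t - x))

lemma Kint_integrable (p b : ℝ) (hp : -1 < p) {t : ℝ} (ht : 1 < t) :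
    IntervalIntegrable (fun s => (1 - s^2)^p * (t - s)^(-b)) volume (-1) 1 :=
  int_aux p hp (cont_tb ht b)

lemma Kint_integrable' (p b : ℝ) (hp : -1 < p) {t : ℝ} (ht : 1 < t) (e : ℝ) :
    IntervalIntegrable (fun s => (1 - s^2)^p * (e * (t - s)^(-b))) volume (-1) 1 :=
  int_aux p hp (continuousOn_const.mul (cont_tb ht b))

lemma Kint_pos (p b : ℝ) (hp : -1 < p) {t : ℝ} (ht : 1 < t) : 0 < Kint p b t := by
  apply intervalIntegral.intervalIntegral_pos_of_pos_on (Kint_integrable p b hp ht)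
  · intro x hx
    have h1 : (0:ℝ) < 1 - x^2 := by nlinarith [hx.1, hx.2]
    have h2 : (0:ℝ) < t - x := by linarith [hx.2]
    exact mul_pos (Real.rpow_pos_of_pos h1 _) (Real.rpow_pos_of_pos h2 _)
  · norm_num

lemma Kint_hasDerivAt (p b : ℝ) (hp : -1 < p) {t : ℝ} (ht : 1 < t) :
    HasDerivAt (fun u => Kint p b u) (-b * Kint p (b+1) t) t := by
  have hεpos : 0 < (t-1)/2 := by linarith
  have key : HasDerivAt (fun x => ∫ s in (-1:ℝ)..1, (1 - s^2)^p * (x - s)^(-b))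
      (∫ s in (-1:ℝ)..1, (1 - s^2)^p * (-b * (t - s)^(-(b+1)))) t := by
    refine (intervalIntegral.hasDerivAt_integral_of_dominated_loc_of_deriv_le
      (F := fun x s => (1 - s^2)^p * (x - s)^(-b))
      (F' := fun x s => (1 - s^2)^p * (-b * (x - s)^(-(b+1))))
      (bound := fun s => (1 - s^2)^p *
        (|b| * max (((t-1)/2) ^ (-(b+1))) ((t + (t-1)/2 + 1) ^ (-(b+1)))))
      (Metric.ball_mem_nhds t hεpos) ?_ ?_ ?_ ?_ ?_ ?_).2
    · filter_upwards [eventually_gt_nhds ht] with x hx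
      exact (intervalIntegrable_iff.1 (Kint_integrable p b hp hx)).aestronglyMeasurable
    · exact Kint_integrable p b hp ht
    · exact (intervalIntegrable_iff.1 (Kint_integrable' p (b+1) hp ht (-b))).aestronglyMeasurable
    · filter_upwards with s hs x hx
      have hs' : s ∈ Set.Ioc (-1:ℝ) 1 := by
        rwa [Set.uIoc_of_le (by norm_num : (-1:ℝ) ≤ 1)] at hs
      have hxd := abs_lt.1 (by simpa [Real.dist_eq] using Metric.mem_ball.1 hx)
      have h1 : (t-1)/2 ≤ x - s := by linarith [hs'.2, hxd.1]
      have h2 : x - s ≤ t + (t-1)/2 + 1 := by linarith [hs'.1, hxd.2]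
      have hxs : 0 < x - s := lt_of_lt_of_le hεpos h1
      have hb : (x - s) ^ (-(b+1)) ≤
          max (((t-1)/2) ^ (-(b+1))) ((t + (t-1)/2 + 1) ^ (-(b+1))) := by
        rcases le_or_gt 0 (-(b+1)) with he | he
        · exact le_trans (Real.rpow_le_rpow hxs.le h2 he) (le_max_right _ _)
        · exact le_trans (Real.rpow_le_rpow_of_nonpos hεpos h1 he.le)
            (le_max_left _ _)
      have hnn : (0:ℝ) ≤ (1 - s^2)^p := Real.rpow_nonneg (by nlinarith [hs'.1, hs'.2]) _
      rw [norm_mul, norm_mul]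
      simp only [Real.norm_eq_abs]
      rw [abs_of_nonneg hnn]
      apply mul_le_mul_of_nonneg_left _ hnn
      rw [abs_of_nonneg (Real.rpow_nonneg hxs.le _), abs_neg]
      exact mul_le_mul_of_nonneg_left hb (abs_nonneg _)
    · exact int_aux p hp (continuousOn_const.mul continuousOn_const)
    · filter_upwards with s hs x hx
      have hs' : s ∈ Set.Ioc (-1:ℝ) 1 := by
        rwa [Set.uIoc_of_le (by norm_num : (-1:ℝ) ≤ 1)] at hs
      have hxd := abs_lt.1 (by simpa [Real.dist_eq] using Metric.mem_ball.1 hx)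
      have hxs : 0 < x - s := by linarith [hs'.2, hxd.1]
      have hd : HasDerivAt (fun y : ℝ => (y - s) ^ (-b)) (-b * (x - s)^(-(b+1))) x := by
        have h0 : HasDerivAt (fun y : ℝ => y - s) 1 x := (hasDerivAt_id x).sub_const s
        have h1 : HasDerivAt (fun y : ℝ => y ^ (-b)) (-b * (x - s) ^ (-b - 1)) (x - s) :=
          Real.hasDerivAt_rpow_const (Or.inl hxs.ne')
        have := h1.comp x h0
        simp only [mul_one] at this
        refine this.congr_deriv (Eq.symm ?_)
        rw [show -b - 1 = -(b+1) by ring]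
      exact hd.const_mul _
  have heq : (-b) * Kint p (b+1) t = ∫ s in (-1:ℝ)..1, (1 - s^2)^p * (-b * (t - s)^(-(b+1))) := by
    rw [Kint, ← intervalIntegral.integral_const_mul]
    congr 1; funext s; ring
  rw [heq]
  exact key

lemma ibp (p b : ℝ) (hp : 0 < p) {t : ℝ} (ht : 1 < t) :
    (∫ s in (-1:ℝ)..1, ((1 - s^2)^(p-1) * ((p * (-(2*s))) * (t-s)^(-b))
      + (1 - s^2)^p * (b * (t-s)^(-(b+1))))) = 0 := by
  have hint : IntervalIntegrable (fun s => (1 - s^2)^(p-1) * ((p * (-(2*s))) * (t-s)^(-b))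
      + (1 - s^2)^p * (b * (t-s)^(-(b+1)))) volume (-1) 1 := by
    apply IntervalIntegrable.add
    · exact int_aux (p-1) (by linarith) ((continuousOn_const.mul (by fun_prop)).mul (cont_tb ht b))
    · exact int_aux p (by linarith) (continuousOn_const.mul (cont_tb ht (b+1)))
  have hcont : ContinuousOn (fun s : ℝ => (1 - s^2)^p * (t-s)^(-b)) (Set.Icc (-1:ℝ) 1) := by
    apply ContinuousOn.mul _ (cont_tb ht b)
    exact ContinuousOn.rpow_const (by fun_prop) (fun x _ => Or.inr hp.le)
  have hderiv : ∀ x ∈ Set.Ioo (-1:ℝ) 1,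
      HasDerivAt (fun s : ℝ => (1 - s^2)^p * (t-s)^(-b))
        ((1 - x^2)^(p-1) * ((p * (-(2*x))) * (t-x)^(-b))
          + (1 - x^2)^p * (b * (t-x)^(-(b+1)))) x := by
    intro x hx
    have h1s : (0:ℝ) < 1 - x^2 := by nlinarith [hx.1, hx.2]
    have htx : (0:ℝ) < t - x := by linarith [hx.2]
    have hu : HasDerivAt (fun s : ℝ => 1 - s^2) (-(2*x)) x := by
      simpa using ((hasDerivAt_pow 2 x).const_sub 1)
    have dA : HasDerivAt (fun s : ℝ => (1 - s^2)^p) (p * (1-x^2)^(p-1) * (-(2*x))) x :=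
      ((Real.hasDerivAt_rpow_const (p := p) (Or.inl h1s.ne')).comp x hu :)
    have hu2 : HasDerivAt (fun s : ℝ => t - s) (-1) x := by
      simpa using (hasDerivAt_id x).const_sub t
    have dB : HasDerivAt (fun s : ℝ => (t-s)^(-b)) (b * (t-x)^(-(b+1))) x := by
      have := (Real.hasDerivAt_rpow_const (p := -b) (Or.inl htx.ne')).comp x hu2
      refine this.congr_deriv (Eq.symm ?_)
      rw [show -b - 1 = -(b+1) from by ring]; ring
    have := dA.mul dB
    refine this.congr_deriv (Eq.symm ?_)
    ring
  have := intervalIntegral.integral_eq_sub_of_hasDerivAt_of_le (by norm_num) hcont hderiv hint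
  rw [this]
  have e1 : ((1:ℝ) - 1^2) = 0 := by norm_num
  have e2 : ((1:ℝ) - (-1)^2) = 0 := by norm_num
  rw [e1, e2, Real.zero_rpow hp.ne']
  ring

lemma relA (p b : ℝ) (hp : -1 < p) {t : ℝ} (ht : 1 < t) :
    b * Kint (p+1) (b+1) t = 2*(p+1) * (t * Kint p b t - Kint p (b-1) t) := by
  have h0 := ibp (p+1) b (by linarith) ht
  have i1 : IntervalIntegrable
      (fun s => (1 - s^2)^(p+1-1) * (((p+1) * (-(2*s))) * (t-s)^(-b))) volume (-1) 1 :=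
    int_aux (p+1-1) (by linarith) ((continuousOn_const.mul (by fun_prop)).mul (cont_tb ht b))
  have i2 : IntervalIntegrable
      (fun s => (1 - s^2)^(p+1) * (b * (t-s)^(-(b+1)))) volume (-1) 1 :=
    int_aux (p+1) (by linarith) (continuousOn_const.mul (cont_tb ht (b+1)))
  rw [intervalIntegral.integral_add i1 i2] at h0
  have e2 : (∫ s in (-1:ℝ)..1, (1 - s^2)^(p+1) * (b * (t-s)^(-(b+1))))
      = b * Kint (p+1) (b+1) t := by
    rw [Kint, ← intervalIntegral.integral_const_mul]
    congr 1; funext s; ring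
  have e1 : (∫ s in (-1:ℝ)..1, (1 - s^2)^(p+1-1) * (((p+1) * (-(2*s))) * (t-s)^(-b)))
      = -(2*(p+1)) * (t * Kint p b t - Kint p (b-1) t) := by
    have hpt : ∀ s ∈ Set.uIcc (-1:ℝ) 1,
        (1 - s^2)^(p+1-1) * (((p+1) * (-(2*s))) * (t-s)^(-b))
        = -(2*(p+1)) * (t * ((1-s^2)^p * (t-s)^(-b)) - (1-s^2)^p * (t-s)^(-(b-1))) := by
      intro s hs
      have hs' : s ∈ Set.Icc (-1:ℝ) 1 := by
        rwa [Set.uIcc_of_le (by norm_num : (-1:ℝ) ≤ 1)] at hs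
      have hu : (0:ℝ) < t - s := by linarith [hs'.2]
      have hb1 : (t-s)^(-(b-1)) = (t-s) * (t-s)^(-b) := by
        rw [show -(b-1) = 1 + -b from by ring, Real.rpow_add hu, Real.rpow_one]
      rw [show p+1-1 = p from by ring, hb1]; ring
    rw [intervalIntegral.integral_congr hpt, intervalIntegral.integral_const_mul,
      intervalIntegral.integral_sub ((Kint_integrable p b hp ht).const_mul t)
        (Kint_integrable p (b-1) hp ht),
      intervalIntegral.integral_const_mul]
    simp only [Kint]
  rw [e1, e2] at h0
  linarith

lemma relB (p b : ℝ) (hp : -1 < p) {t : ℝ} (ht : 1 < t) :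
    Kint (p+1) (b+1) t = (1 - t^2) * Kint p (b+1) t + 2*t * Kint p b t - Kint p (b-1) t := by
  have hpt : ∀ s ∈ Set.uIcc (-1:ℝ) 1,
      (1 - s^2)^(p+1) * (t-s)^(-(b+1))
      = (1-t^2) * ((1-s^2)^p * (t-s)^(-(b+1))) + 2*t * ((1-s^2)^p * (t-s)^(-b))
        - (1-s^2)^p * (t-s)^(-(b-1)) := by
    intro s hs
    have hs' : s ∈ Set.Icc (-1:ℝ) 1 := by
      rwa [Set.uIcc_of_le (by norm_num : (-1:ℝ) ≤ 1)] at hs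
    have hu : (0:ℝ) < t - s := by linarith [hs'.2]
    have hss : (0:ℝ) ≤ 1 - s^2 := by nlinarith [hs'.1, hs'.2]
    have hA1 : (1-s^2)^(p+1) = (1-s^2) * (1-s^2)^p := by
      rw [show p+1 = 1+p from by ring, Real.rpow_add' hss (by linarith), Real.rpow_one]
    have hA2 : (t-s)^(-b) = (t-s) * (t-s)^(-(b+1)) := by
      rw [show -b = 1 + -(b+1) from by ring, Real.rpow_add hu, Real.rpow_one]
    have hA3 : (t-s)^(-(b-1)) = (t-s)^2 * (t-s)^(-(b+1)) := by
      rw [show -(b-1) = 2 + -(b+1) from by ring, Real.rpow_add hu,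
        show ((2:ℝ):ℝ) = ((2:ℕ):ℝ) from by norm_num, Real.rpow_natCast]
    rw [hA1, hA2, hA3]; ring
  have hcg := intervalIntegral.integral_congr (μ := volume) hpt
  rw [Kint, hcg, intervalIntegral.integral_sub (((Kint_integrable p (b+1) hp ht).const_mul
      (1-t^2)).add ((Kint_integrable p b hp ht).const_mul (2*t)))
      (Kint_integrable p (b-1) hp ht),
    intervalIntegral.integral_add ((Kint_integrable p (b+1) hp ht).const_mul (1-t^2))
      ((Kint_integrable p b hp ht).const_mul (2*t)),
    intervalIntegral.integral_const_mul, intervalIntegral.integral_const_mul]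
  simp only [Kint]

lemma Qh_eq (n m : ℕ) (t : ℝ) :
    Qh n m t = (((-1 : ℝ) ^ m / (2 : ℝ) ^ ((n : ℝ) + 1 / 2)) *
      (Real.Gamma ((n : ℝ) + (m : ℝ) + 1 / 2) / Real.Gamma ((n : ℝ) + 1 / 2))) *
      ((t ^ 2 - 1) ^ ((m : ℝ) / 2) *
        Kint ((n : ℝ) - 1/2) ((n : ℝ) + (m : ℝ) + 1/2) t) := by
  rw [Qh, Kint]; ring

lemma Qh_succ (n m : ℕ) (t : ℝ) :
    Qh (n+1) m t = ((((n:ℝ) + (m:ℝ) + 1/2)) / (2 * ((n:ℝ) + 1/2))) *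
      ((((-1 : ℝ) ^ m / (2 : ℝ) ^ ((n : ℝ) + 1 / 2)) *
        (Real.Gamma ((n : ℝ) + (m : ℝ) + 1 / 2) / Real.Gamma ((n : ℝ) + 1 / 2))) *
      ((t ^ 2 - 1) ^ ((m : ℝ) / 2) *
        Kint (((n : ℝ) - 1/2) + 1) (((n : ℝ) + (m : ℝ) + 1/2) + 1) t)) := by
  rw [Qh_eq (n+1) m t]
  have hK : Kint (((n+1:ℕ) : ℝ) - 1/2) (((n+1:ℕ) : ℝ) + (m:ℝ) + 1/2) t
      = Kint (((n : ℝ) - 1/2) + 1) (((n : ℝ) + (m : ℝ) + 1/2) + 1) t := by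
    congr 1 <;> push_cast <;> ring
  rw [hK]
  have e1 : (((n+1:ℕ):ℝ) + (m:ℝ) + 1/2) = ((n:ℝ) + (m:ℝ) + 1/2) + 1 := by push_cast; ring
  have e2 : (((n+1:ℕ):ℝ) + 1/2) = ((n:ℝ) + 1/2) + 1 := by push_cast; ring
  rw [e1, e2, Real.Gamma_add_one (by positivity : ((n:ℝ) + (m:ℝ) + 1/2) ≠ 0),
    Real.Gamma_add_one (by positivity : ((n:ℝ) + 1/2) ≠ 0),
    Real.rpow_add (by norm_num : (0:ℝ) < 2) ((n:ℝ) + 1/2) 1, Real.rpow_one]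
  have hΓ1 : Real.Gamma ((n:ℝ) + 1/2) ≠ 0 :=
    ne_of_gt (Real.Gamma_pos_of_pos (by positivity))
  have h2 : ((2:ℝ) ^ ((n:ℝ) + 1/2)) ≠ 0 := ne_of_gt (Real.rpow_pos_of_pos (by norm_num) _)
  field_simp

lemma Qh_hasDerivAt (n m : ℕ) {t : ℝ} (ht : 1 < t) :
    HasDerivAt (fun u => Qh n m u)
      ((((((n:ℝ)+1/2) - (m:ℝ)) * Qh (n+1) m t - ((n:ℝ)+1/2) * t * Qh n m t) / (t^2-1)) ) t := by
  have hp : (-1:ℝ) < (n:ℝ) - 1/2 := by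
    have : (0:ℝ) ≤ (n:ℝ) := Nat.cast_nonneg n
    linarith
  have ht2 : (0:ℝ) < t^2 - 1 := by nlinarith
  have hK : HasDerivAt (fun u => Kint ((n:ℝ)-1/2) ((n:ℝ)+(m:ℝ)+1/2) u)
      (-((n:ℝ)+(m:ℝ)+1/2) * Kint ((n:ℝ)-1/2) (((n:ℝ)+(m:ℝ)+1/2)+1) t) t :=
    Kint_hasDerivAt _ _ hp ht
  have hu : HasDerivAt (fun u : ℝ => u^2 - 1) (2*t) t := by
    simpa using ((hasDerivAt_pow 2 t).sub_const 1)
  have hpow : HasDerivAt (fun u : ℝ => (u^2 - 1)^((m:ℝ)/2))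
      (((m:ℝ)/2) * (t^2-1)^((m:ℝ)/2 - 1) * (2*t)) t :=
    ((Real.hasDerivAt_rpow_const (p := (m:ℝ)/2) (Or.inl ht2.ne')).comp t hu :)
  have hprod := (hpow.mul hK).const_mul
    (((-1 : ℝ) ^ m / (2 : ℝ) ^ ((n : ℝ) + 1 / 2)) *
      (Real.Gamma ((n : ℝ) + (m : ℝ) + 1 / 2) / Real.Gamma ((n : ℝ) + 1 / 2)))
  have heq : (fun u => Qh n m u) = (fun u =>
      (((-1 : ℝ) ^ m / (2 : ℝ) ^ ((n : ℝ) + 1 / 2)) *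
        (Real.Gamma ((n : ℝ) + (m : ℝ) + 1 / 2) / Real.Gamma ((n : ℝ) + 1 / 2))) *
      ((u ^ 2 - 1) ^ ((m : ℝ) / 2) *
        Kint ((n : ℝ) - 1/2) ((n : ℝ) + (m : ℝ) + 1/2) u)) := funext fun u => Qh_eq n m u
  rw [heq]
  refine hprod.congr_deriv (Eq.symm ?_)
  have hA := relA ((n:ℝ)-1/2) ((n:ℝ)+(m:ℝ)+1/2) hp ht
  have hB := relB ((n:ℝ)-1/2) ((n:ℝ)+(m:ℝ)+1/2) hp ht
  have hV : (t^2-1)^((m:ℝ)/2 - 1) * (t^2-1) = (t^2-1)^((m:ℝ)/2) := by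
    rw [Real.rpow_sub ht2, Real.rpow_one, div_mul_cancel₀]
    exact ht2.ne'
  rw [Qh_succ n m t, Qh_eq n m t]
  generalize hGg : (((-1 : ℝ) ^ m / (2 : ℝ) ^ ((n : ℝ) + 1 / 2)) *
      (Real.Gamma ((n : ℝ) + (m : ℝ) + 1 / 2) / Real.Gamma ((n : ℝ) + 1 / 2))) = G at *
  generalize hVv : (t^2-1)^((m:ℝ)/2 - 1) = V at *
  generalize hW : (t^2-1)^((m:ℝ)/2) = W at *
  generalize hK0 : Kint ((n:ℝ)-1/2) ((n:ℝ)+(m:ℝ)+1/2) t = K0 at *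
  generalize hK1 : Kint ((n:ℝ)-1/2) (((n:ℝ)+(m:ℝ)+1/2)+1) t = K1 at *
  generalize hKm : Kint ((n:ℝ)-1/2) (((n:ℝ)+(m:ℝ)+1/2)-1) t = Km at *
  generalize hKp : Kint (((n:ℝ)-1/2)+1) (((n:ℝ)+(m:ℝ)+1/2)+1) t = Kp at *
  have key1 : ((n:ℝ)+(m:ℝ)+1/2)*(t^2-1)*K1
      = 2*(m:ℝ)*t*K0 + (((n:ℝ)+1/2)-(m:ℝ))*Km := by
    linear_combination ((n:ℝ)+(m:ℝ)+1/2)*hB - hA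
  have hn2 : ((n:ℝ) + 1/2) ≠ 0 := by positivity
  have hsucc2 : (((n:ℝ)+(m:ℝ)+1/2) / (2*((n:ℝ)+1/2))) * (G * (W * Kp))
      = G * (W * (t*K0 - Km)) := by
    field_simp
    linear_combination (2*G*W)*hA
  rw [hsucc2, div_eq_iff ht2.ne']
  linear_combination (G*W)*key1 + (-((m:ℝ)*t*G*K0))*hV

lemma Qh_ne_zero (n m : ℕ) {t : ℝ} (ht : 1 < t) : Qh n m t ≠ 0 := by
  have hp : (-1:ℝ) < (n:ℝ) - 1/2 := by
    have : (0:ℝ) ≤ (n:ℝ) := Nat.cast_nonneg n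
    linarith
  have ht2 : (0:ℝ) < t^2 - 1 := by nlinarith
  rw [Qh_eq]
  apply mul_ne_zero
  · apply mul_ne_zero
    · exact div_ne_zero (pow_ne_zero _ (by norm_num)) (ne_of_gt (Real.rpow_pos_of_pos (by norm_num) _))
    · exact div_ne_zero (ne_of_gt (Real.Gamma_pos_of_pos (by positivity)))
        (ne_of_gt (Real.Gamma_pos_of_pos (by positivity)))
  · exact mul_ne_zero (ne_of_gt (Real.rpow_pos_of_pos ht2 _)) (ne_of_gt (Kint_pos _ _ hp ht))

lemma phi_rec (ν k : ℤ) (θ : ℝ) :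
    Phi ν (k-1) θ = 2 * Real.cos θ * Phi ν k θ - Phi ν (k+1) θ := by
  unfold Phi
  split
  · push_cast
    rw [show ((k:ℝ)-1)*θ = (k:ℝ)*θ - θ from by ring,
      show ((k:ℝ)+1)*θ = (k:ℝ)*θ + θ from by ring, Real.cos_sub, Real.cos_add]
    ring
  · push_cast
    rw [show ((k:ℝ)-1)*θ = (k:ℝ)*θ - θ from by ring,
      show ((k:ℝ)+1)*θ = (k:ℝ)*θ + θ from by ring, Real.sin_sub, Real.sin_add]
    ring

/-- the normal derivative of an interior toroidal harmonic equals
`N_{n,m}^{ν,μ}`. -/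
theorem normal_derivative_toroidal_harmonic (η₀ : ℝ) (hη₀ : 0 < η₀) (θ φ : ℝ)
    (n m : ℕ) (ν μ : ℤ) (h : Admissible n m ν μ) :
    DifferentiableAt ℝ (fun η => Ih η₀ n m ν μ η θ φ) η₀ ∧
    (Real.cosh η₀ - Real.cos θ) * deriv (fun η => Ih η₀ n m ν μ η θ φ) η₀ =
      NDer η₀ n m ν μ θ φ := by
  have ht : 1 < Real.cosh η₀ := Real.one_lt_cosh.2 hη₀.ne'
  have hc : 0 < Real.cosh η₀ - Real.cos θ := by
    have := Real.cos_le_one θ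
    linarith
  have hS : 0 < Real.sinh η₀ := Real.sinh_pos_iff.2 hη₀
  have ht2 : (0:ℝ) < Real.cosh η₀ ^ 2 - 1 := by nlinarith
  have hQ0 : Qh n m (Real.cosh η₀) ≠ 0 := Qh_ne_zero n m ht
  -- derivative of the core function
  have h1 : HasDerivAt (fun η => Real.cosh η - Real.cos θ) (Real.sinh η₀) η₀ :=
    (Real.hasDerivAt_cosh η₀).sub_const _
  have h2 : HasDerivAt (fun η => Real.sqrt (Real.cosh η - Real.cos θ))
      (1 / (2 * Real.sqrt (Real.cosh η₀ - Real.cos θ)) * Real.sinh η₀) η₀ :=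
    (Real.hasDerivAt_sqrt hc.ne').comp η₀ h1
  have h3 : HasDerivAt (fun η => Qh n m (Real.cosh η))
      (((((n:ℝ)+1/2) - (m:ℝ)) * Qh (n+1) m (Real.cosh η₀)
          - ((n:ℝ)+1/2) * Real.cosh η₀ * Qh n m (Real.cosh η₀)) / (Real.cosh η₀ ^2-1)
        * Real.sinh η₀) η₀ :=
    (Qh_hasDerivAt n m ht).comp η₀ (Real.hasDerivAt_cosh η₀)
  have hg := h2.mul h3
  have hIh : (fun η => Ih η₀ n m ν μ η θ φ) = fun η =>
      (Real.sqrt (Real.cosh η - Real.cos θ) * Qh n m (Real.cosh η)) *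
        (Phi ν (n : ℤ) θ * Phi μ (m : ℤ) φ / Qh n m (Real.cosh η₀)) := by
    funext η; rw [Ih]; ring
  have hd := hg.mul_const (Phi ν (n : ℤ) θ * Phi μ (m : ℤ) φ / Qh n m (Real.cosh η₀))
  simp only [Pi.mul_apply] at hd
  rw [hIh]
  refine ⟨hd.differentiableAt, ?_⟩
  rw [hd.deriv, NDer, phi_rec ν (n:ℤ) θ]
  simp only [qh]
  have hr2 : Real.sqrt (Real.cosh η₀ - Real.cos θ) ^ 2 = Real.cosh η₀ - Real.cos θ :=
    Real.sq_sqrt hc.le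
  have hS2 : Real.sinh η₀ ^ 2 = Real.cosh η₀ ^ 2 - 1 := Real.sinh_sq η₀
  have hr0 : Real.sqrt (Real.cosh η₀ - Real.cos θ) ≠ 0 := ne_of_gt (Real.sqrt_pos.2 hc)
  rw [← hr2, ← hS2]
  field_simp
  rw [Real.sq_sqrt (sq_nonneg (Real.sqrt (Real.cosh η₀ - Real.cos θ)))]
  linear_combination (Phi ν (n:ℤ) θ * Phi μ (m:ℤ) φ *
      ((8 * (n:ℝ) - 8 * (m:ℝ) + 4) * Qh (n+1) m (Real.cosh η₀) * Real.sqrt (Real.cosh η₀ - Real.cos θ)^2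
        - (8 * (n:ℝ) + 4) * Real.cosh η₀ * Qh n m (Real.cosh η₀) * Real.sqrt (Real.cosh η₀ - Real.cos θ)^2)) * hr2 +
    (Phi ν (n:ℤ) θ * Phi μ (m:ℤ) φ *
      (4 * Qh n m (Real.cosh η₀) * Real.sqrt (Real.cosh η₀ - Real.cos θ)^2)) * hS2
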